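/- The sum v_P + v_D belongs to cl(dom f − dom g) ∩ cl(dom f* + dom g*); in particular this intersection is nonempty. -/

import Mathlib

open scoped InnerProductSpace Pointwise Classical
open Filter Topology

noncomputable section

variable {H : Type*} [NormedAddCommGroup H] [InnerProductSpace ℝ H]

/-- The effective domain of an extended-real-valued function. -/
def fdom {α : Type*} (f : α → EReal) : Set α := {x | f x ≠ ⊤}

/-- The Fenchel conjugate `f*(u) = sup_x (⟪x, u⟫ - f x)`. -/
def fconj (f : H → EReal) : H → EReal :=
  fun u => ⨆ x : H, ((⟪x, u⟫_ℝ : ℝ) : EReal) - f x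

/-- The recession function `(rec f)(y) = sup_{x ∈ dom f} (f (x + y) - f x)`. -/
def recFn (f : H → EReal) : H → EReal :=
  fun y => ⨆ x ∈ fdom f, (f (x + y) - f x)

/-- A proper function: never `-∞` and not identically `+∞`. -/
def ProperFn {α : Type*} (f : α → EReal) : Prop := (∀ x, f x ≠ ⊥) ∧ ∃ x, f x ≠ ⊤

/-- Convexity of an extended-real-valued function, via convexity of its epigraph. -/
def ConvexFn (f : H → EReal) : Prop :=
  Convex ℝ {p : H × ℝ | f p.1 ≤ (p.2 : EReal)}

/-- `v` is the element of minimum norm of `S`, i.e. `v = P_S 0`, the metric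
projection of `0` onto `S`. -/
def IsMinNormPoint (S : Set H) (v : H) : Prop := v ∈ S ∧ ∀ w ∈ S, ‖v‖ ≤ ‖w‖

/-- `p` is the metric projection of `x` onto `S`, i.e. `p = P_S x`. -/
def IsProjOn (S : Set H) (x p : H) : Prop := p ∈ S ∧ ∀ w ∈ S, dist x p ≤ dist x w

/-- The polar cone `S° = {u | ∀ x ∈ S, ⟪x, u⟫ ≤ 0}`. -/
def polarCone (s : Set H) : Set H := {u | ∀ x ∈ s, ⟪x, u⟫_ℝ ≤ 0}

/-- The recession cone `rec S = {x | ∀ y ∈ S, x + y ∈ S}`. -/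
def recCone (s : Set H) : Set H := {x | ∀ y ∈ s, x + y ∈ s}

/-- `p = prox_f w`: `p` minimizes `y ↦ f y + ½‖y - w‖²`. -/
def IsProxOf (f : H → EReal) (w p : H) : Prop :=
  ∀ y : H, f p + ((1 / 2 * ‖p - w‖ ^ 2 : ℝ) : EReal) ≤ f y + ((1 / 2 * ‖y - w‖ ^ 2 : ℝ) : EReal)

section AuxLemmas

variable {H : Type*} [NormedAddCommGroup H] [InnerProductSpace ℝ H]

set_option linter.unusedSectionVars false

lemma ereal_exists_real_ge {x : EReal} (h : x ≠ ⊤) : ∃ c : ℝ, x ≤ (c : ℝ) := by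
  induction x with
  | bot => exact ⟨0, bot_le⟩
  | coe r => exact ⟨r, le_refl _⟩
  | top => exact absurd rfl h

lemma term_le_fconj (f : H → EReal) (u x : H) :
    ((⟪x, u⟫_ℝ : ℝ) : EReal) - f x ≤ fconj f u :=
  le_iSup (fun x => ((⟪x, u⟫_ℝ : ℝ) : EReal) - f x) x

lemma term_top (f : H → EReal) (x : H) (hx : f x = ⊤) (r : ℝ) :
    ((r : ℝ) : EReal) - f x = ⊥ := by rw [hx, sub_eq_add_neg]; simp

lemma term_real (f : H → EReal) (x : H) (hne : f x ≠ ⊤) (hnb : f x ≠ ⊥) (r : ℝ) :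
    ((r : ℝ) : EReal) - f x = ((r - (f x).toReal : ℝ) : EReal) := by
  rw [← EReal.coe_toReal hne hnb, ← EReal.coe_sub]
  rw [EReal.coe_toReal hne hnb]

/-- If `⟪x,u⟫ ≤ M` on `dom f`, then `dom f*` is invariant under shifts by `t • u`. -/
lemma fconj_dom_shift (f : H → EReal) (hbot : ∀ x, f x ≠ ⊥) {u : H} {M : ℝ}
    (hM : ∀ x ∈ fdom f, ⟪x, u⟫_ℝ ≤ M) :
    ∀ a ∈ fdom (fconj f), ∀ t : ℝ, 0 ≤ t → a + t • u ∈ fdom (fconj f) := by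
  intro a ha t ht
  obtain ⟨c, hc⟩ := ereal_exists_real_ge ha
  have key : fconj f (a + t • u) ≤ ((c + t * M : ℝ) : EReal) := by
    apply iSup_le
    intro x
    by_cases hx : f x = ⊤
    · rw [term_top f x hx]; exact bot_le
    · rw [term_real f x hx (hbot x)]
      have h1 : ((⟪x, a⟫_ℝ - (f x).toReal : ℝ) : EReal) ≤ (c : EReal) := by
        rw [← term_real f x hx (hbot x)]
        exact le_trans (term_le_fconj f a x) hc
      rw [EReal.coe_le_coe_iff] at h1
      have h2 : ⟪x, a + t • u⟫_ℝ = ⟪x, a⟫_ℝ + t * ⟪x, u⟫_ℝ := by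
        rw [inner_add_right, real_inner_smul_right]
      rw [EReal.coe_le_coe_iff, h2]
      have h3 : t * ⟪x, u⟫_ℝ ≤ t * M := mul_le_mul_of_nonneg_left (hM x hx) ht
      linarith
  exact (lt_of_le_of_lt key (EReal.coe_lt_top _)).ne

lemma fdom_convex (f : H → EReal) (hbot : ∀ x, f x ≠ ⊥) (hcvx : ConvexFn f) :
    Convex ℝ (fdom f) := by
  intro x hx y hy θ μ hθ hμ hθμ
  have hmem : (x, (f x).toReal) ∈ {p : H × ℝ | f p.1 ≤ (p.2 : EReal)} :=
    EReal.le_coe_toReal hx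
  have hmem' : (y, (f y).toReal) ∈ {p : H × ℝ | f p.1 ≤ (p.2 : EReal)} :=
    EReal.le_coe_toReal hy
  have hcc := hcvx hmem hmem' hθ hμ hθμ
  simp only [Prod.smul_mk, Prod.mk_add_mk, Set.mem_setOf_eq, smul_eq_mul] at hcc
  intro htop
  rw [htop] at hcc
  exact EReal.coe_ne_top _ (top_le_iff.mp hcc)

lemma fconj_dom_convex (f : H → EReal) (hbot : ∀ x, f x ≠ ⊥) :
    Convex ℝ (fdom (fconj f)) := by
  intro a ha b hb θ μ hθ hμ hθμ
  obtain ⟨ca, hca⟩ := ereal_exists_real_ge ha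
  obtain ⟨cb, hcb⟩ := ereal_exists_real_ge hb
  have key : fconj f (θ • a + μ • b) ≤ ((θ * ca + μ * cb : ℝ) : EReal) := by
    apply iSup_le
    intro x
    by_cases hx : f x = ⊤
    · rw [hx, sub_eq_add_neg]
      simp
    · have hfx : f x = ((f x).toReal : ℝ) := (EReal.coe_toReal hx (hbot x)).symm
      set fx := (f x).toReal
      have hterm : ∀ u : H, ((⟪x, u⟫_ℝ : ℝ) : EReal) - f x = ((⟪x, u⟫_ℝ - fx : ℝ) : EReal) := by
        intro u; rw [hfx, ← EReal.coe_sub]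
      rw [hterm]
      have h1 : ⟪x, a⟫_ℝ - fx ≤ ca := by
        have := le_trans (le_iSup (fun x => ((⟪x, a⟫_ℝ : ℝ) : EReal) - f x) x) hca
        rw [hterm a, EReal.coe_le_coe_iff] at this; exact this
      have h2 : ⟪x, b⟫_ℝ - fx ≤ cb := by
        have := le_trans (le_iSup (fun x => ((⟪x, b⟫_ℝ : ℝ) : EReal) - f x) x) hcb
        rw [hterm b, EReal.coe_le_coe_iff] at this; exact this
      rw [EReal.coe_le_coe_iff]
      have hin : ⟪x, θ • a + μ • b⟫_ℝ = θ * ⟪x, a⟫_ℝ + μ * ⟪x, b⟫_ℝ := by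
        rw [inner_add_right, real_inner_smul_right, real_inner_smul_right]
      rw [hin]
      have hfx1 : θ * fx + μ * fx = fx := by rw [← add_mul, hθμ, one_mul]
      nlinarith [mul_le_mul_of_nonneg_left h1 hθ, mul_le_mul_of_nonneg_left h2 hμ]
  exact (lt_of_le_of_lt key (EReal.coe_lt_top _)).ne

lemma epi_isClosed (f : H → EReal) (hf : LowerSemicontinuous f) :
    IsClosed {p : H × ℝ | f p.1 ≤ (p.2 : EReal)} := by
  have h1 : IsClosed {q : H × EReal | f q.1 ≤ q.2} := hf.isClosed_epigraph
  exact h1.preimage (continuous_fst.prodMk (continuous_coe_real_ereal.comp continuous_snd))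

/-- A proper lsc convex function has nonempty conjugate domain. -/
lemma fconj_dom_nonempty [FiniteDimensional ℝ H] (f : H → EReal) (hprop : ProperFn f)
    (hlsc : LowerSemicontinuous f) (hcvx : ConvexFn f) :
    ∃ a : H, fconj f a ≠ ⊤ := by
  obtain ⟨hbot, x₀, hx₀⟩ := hprop
  set r₀ := (f x₀).toReal with hr₀
  have hfx₀ : f x₀ = (r₀ : ℝ) := (EReal.coe_toReal hx₀ (hbot x₀)).symm
  have hpt : (x₀, r₀ - 1) ∉ {p : H × ℝ | f p.1 ≤ (p.2 : EReal)} := by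
    simp only [Set.mem_setOf_eq, hfx₀, EReal.coe_le_coe_iff, not_le]
    linarith
  obtain ⟨φ, β, hβ₁, hβ₂⟩ :=
    geometric_hahn_banach_closed_point (hcvx) (epi_isClosed f hlsc) hpt
  set s := φ (0, 1) with hs
  have hφ : ∀ x : H, ∀ r : ℝ, φ (x, r) = φ (x, 0) + r * s := by
    intro x r
    have : (x, r) = (x, 0) + r • ((0 : H), (1 : ℝ)) := by
      simp [Prod.ext_iff]
    rw [this, map_add, map_smul, smul_eq_mul]
  have hepi : ∀ x : H, f x ≠ ⊤ → ∀ r : ℝ, (f x).toReal ≤ r → φ (x, 0) + r * s < β := by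
    intro x hx r hr
    have hmem : (x, r) ∈ {p : H × ℝ | f p.1 ≤ (p.2 : EReal)} := by
      simp only [Set.mem_setOf_eq]
      calc f x ≤ ((f x).toReal : ℝ) := EReal.le_coe_toReal hx
        _ ≤ (r : EReal) := EReal.coe_le_coe_iff.mpr hr
    have := hβ₁ _ hmem
    rwa [hφ] at this
  have hs_neg : s < 0 := by
    have h1 : φ (x₀, 0) + r₀ * s < β := hepi x₀ hx₀ r₀ le_rfl
    have h2 : β < φ (x₀, 0) + (r₀ - 1) * s := by
      have := hβ₂; rwa [hφ] at this
    by_contra hs0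
    push_neg at hs0
    nlinarith
  set σ := -s with hσ
  have hσpos : 0 < σ := by simp [hσ]; linarith
  set ψ : H →L[ℝ] ℝ := φ.comp (ContinuousLinearMap.inl ℝ H ℝ) with hψ
  have hψ_apply : ∀ x : H, ψ x = φ (x, 0) := fun x => rfl
  set a := (InnerProductSpace.toDual ℝ H).symm (σ⁻¹ • ψ) with ha
  have ha_apply : ∀ x : H, ⟪a, x⟫_ℝ = σ⁻¹ * ψ x := by
    intro x
    rw [ha, InnerProductSpace.toDual_symm_apply]
    rfl
  refine ⟨a, ?_⟩
  have key : fconj f a ≤ ((β / σ : ℝ) : EReal) := by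
    apply iSup_le
    intro x
    by_cases hx : f x = ⊤
    · rw [hx, sub_eq_add_neg]; simp
    · have hfx : f x = ((f x).toReal : ℝ) := (EReal.coe_toReal hx (hbot x)).symm
      set fx := (f x).toReal
      have hterm : ((⟪x, a⟫_ℝ : ℝ) : EReal) - f x = ((⟪x, a⟫_ℝ - fx : ℝ) : EReal) := by
        rw [hfx, ← EReal.coe_sub]
      rw [hterm, EReal.coe_le_coe_iff]
      have h1 : φ (x, 0) + fx * s < β := hepi x hx fx le_rfl
      have h2 : ⟪x, a⟫_ℝ = σ⁻¹ * φ (x, 0) := by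
        rw [real_inner_comm, ha_apply, hψ_apply]
      rw [h2]
      rw [div_eq_inv_mul]
      have h3 : φ (x, 0) - σ * fx < β := by
        have : σ * fx = -(fx * s) := by rw [hσ]; ring
        rw [this]; linarith
      have h4 : σ⁻¹ * (φ (x, 0) - σ * fx) ≤ σ⁻¹ * β :=
        mul_le_mul_of_nonneg_left (le_of_lt h3) (le_of_lt (inv_pos.mpr hσpos))
      calc σ⁻¹ * φ (x, 0) - fx = σ⁻¹ * (φ (x, 0) - σ * fx) := by
            field_simp
        _ ≤ σ⁻¹ * β := h4
  exact (lt_of_le_of_lt key (EReal.coe_lt_top _)).ne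

lemma closure_shift' {S : Set H} {u : H} (h : ∀ x ∈ S, x + u ∈ closure S) :
    ∀ x ∈ closure S, x + u ∈ closure S := by
  intro x hx
  have hc : Continuous (fun z : H => z + u) := continuous_add_right u
  have hsub : S ⊆ (fun z : H => z + u) ⁻¹' closure S := h
  exact closure_minimal hsub ((isClosed_closure).preimage hc) hx

lemma sub_mem_closure_sub {A B : Set H} {a : H} (haA : a ∈ A) {b : H} (hb : b ∈ closure B) :
    a - b ∈ closure (A - B) := by
  have hc : Continuous (fun z : H => a - z) := continuous_const.sub continuous_id
  have h1 : a - b ∈ closure ((fun z : H => a - z) '' B) :=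
    map_mem_closure hc hb (fun z hz => Set.mem_image_of_mem _ hz)
  refine closure_mono ?_ h1
  rintro _ ⟨z, hz, rfl⟩
  exact Set.sub_mem_sub haA hz

/-- Minimum-norm point: if shifting along `w` stays in `S`, then `⟪v, w⟫ ≥ 0`. -/
lemma minnorm_inner_nonneg {S : Set H} {v : H} (hv : IsMinNormPoint S v) {w : H}
    (hshift : ∀ t : ℝ, 0 ≤ t → v + t • w ∈ S) : 0 ≤ ⟪v, w⟫_ℝ := by
  by_contra hneg
  push_neg at hneg
  have hw : w ≠ 0 := by
    intro h0; rw [h0, inner_zero_right] at hneg; exact lt_irrefl _ hneg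
  have hw2 : 0 < ‖w‖ ^ 2 := by
    have := norm_pos_iff.mpr hw
    positivity
  set t := -⟪v, w⟫_ℝ / ‖w‖ ^ 2 with ht
  have htpos : 0 < t := div_pos (by linarith) hw2
  have hmem := hshift t (le_of_lt htpos)
  have hle : ‖v‖ ≤ ‖v + t • w‖ := hv.2 _ hmem
  have hsq : ‖v + t • w‖ ^ 2 = ‖v‖ ^ 2 + 2 * (t * ⟪v, w⟫_ℝ) + t ^ 2 * ‖w‖ ^ 2 := by
    rw [norm_add_sq_real, real_inner_smul_right, norm_smul]
    rw [mul_pow, Real.norm_eq_abs, abs_of_pos htpos]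
  have h2 : ‖v‖ ^ 2 ≤ ‖v + t • w‖ ^ 2 := pow_le_pow_left₀ (norm_nonneg v) hle 2
  rw [hsq] at h2
  have h3 : t * ‖w‖ ^ 2 = -⟪v, w⟫_ℝ := by
    rw [ht, div_mul_cancel₀ _ hw2.ne']
  nlinarith

/-- If `⟪a,u⟫ ≤ M` on `dom f*`, then the closure of `dom f` is invariant
under shifts by `t • u`. -/
lemma cl_fdom_shift [FiniteDimensional ℝ H] (f : H → EReal) (hprop : ProperFn f)
    (hlsc : LowerSemicontinuous f) (hcvx : ConvexFn f) {u : H} {M : ℝ}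
    (hM : ∀ a ∈ fdom (fconj f), ⟪a, u⟫_ℝ ≤ M) :
    ∀ x ∈ closure (fdom f), ∀ t : ℝ, 0 ≤ t → x + t • u ∈ closure (fdom f) := by
  intro x hx t ht
  by_contra hout
  have hconv : Convex ℝ (closure (fdom f)) := (fdom_convex f hprop.1 hcvx).closure
  obtain ⟨φ, β, hβ₁, hβ₂⟩ := geometric_hahn_banach_closed_point hconv isClosed_closure hout
  set w := (InnerProductSpace.toDual ℝ H).symm φ with hwdef
  have hw : ∀ z, φ z = ⟪w, z⟫_ℝ := fun z => (InnerProductSpace.toDual_symm_apply).symm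
  have hbound : ∀ z ∈ fdom f, ⟪z, w⟫_ℝ ≤ β := by
    intro z hz
    rw [real_inner_comm, ← hw]
    exact le_of_lt (hβ₁ z (subset_closure hz))
  obtain ⟨a₀, ha₀⟩ := fconj_dom_nonempty f hprop hlsc hcvx
  have hshift := fconj_dom_shift f hprop.1 hbound a₀ ha₀
  have hwu : ⟪w, u⟫_ℝ ≤ 0 := by
    by_contra hpos
    push_neg at hpos
    set s := max 0 ((M - ⟪a₀, u⟫_ℝ) / ⟪w, u⟫_ℝ + 1) with hsdef
    have hs0 : 0 ≤ s := le_max_left _ _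
    have hs1 : (M - ⟪a₀, u⟫_ℝ) / ⟪w, u⟫_ℝ + 1 ≤ s := le_max_right _ _
    have hmem := hshift s hs0
    have := hM _ hmem
    rw [inner_add_left, real_inner_smul_left] at this
    have hgt : (M - ⟪a₀, u⟫_ℝ) / ⟪w, u⟫_ℝ * ⟪w, u⟫_ℝ = M - ⟪a₀, u⟫_ℝ := by
      field_simp
    nlinarith [mul_le_mul_of_nonneg_right hs1 (le_of_lt hpos)]
  have h1 : ⟪w, x⟫_ℝ < β := by rw [← hw]; exact hβ₁ x hx
  have h2 : β < ⟪w, x⟫_ℝ + t * ⟪w, u⟫_ℝ := by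
    have := hβ₂
    rw [hw, inner_add_right, real_inner_smul_right] at this
    exact this
  nlinarith [mul_nonneg ht (neg_nonneg.mpr hwu)]

end AuxLemmas


theorem vP_add_vD_mem_inter {H : Type*} [NormedAddCommGroup H] [InnerProductSpace ℝ H]
    [FiniteDimensional ℝ H]
    (f g : H → EReal)
    (hf_prop : ProperFn f) (hf_lsc : LowerSemicontinuous f) (hf_cvx : ConvexFn f)
    (hg_prop : ProperFn g) (hg_lsc : LowerSemicontinuous g) (hg_cvx : ConvexFn g)
    (vP : H) (hvP : IsMinNormPoint (closure (fdom f - fdom g)) vP)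
    (vD : H) (hvD : IsMinNormPoint (closure (fdom (fconj f) + fdom (fconj g))) vD)
    : vP + vD ∈ closure (fdom f - fdom g) ∩ closure (fdom (fconj f) + fdom (fconj g)) := by
  constructor
  -- Part 1: vP + vD ∈ closure (dom f - dom g)
  · by_contra hout
    have hCconv : Convex ℝ (closure (fdom f - fdom g)) :=
      ((fdom_convex f hf_prop.1 hf_cvx).sub (fdom_convex g hg_prop.1 hg_cvx)).closure
    obtain ⟨φ, β, hβ₁, hβ₂⟩ :=
      geometric_hahn_banach_closed_point hCconv isClosed_closure hout
    set w := (InnerProductSpace.toDual ℝ H).symm φ with hwdef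
    have hw : ∀ z, φ z = ⟪w, z⟫_ℝ := fun z => (InnerProductSpace.toDual_symm_apply).symm
    have hvPlt : ⟪w, vP⟫_ℝ < β := by rw [← hw]; exact hβ₁ _ hvP.1
    have hpos : 0 < ⟪w, vD⟫_ℝ := by
      have h := hβ₂
      rw [hw, inner_add_right] at h
      linarith
    obtain ⟨x₀, hx₀⟩ := hf_prop.2
    have hgbound : ∀ y ∈ fdom g, ⟪y, -w⟫_ℝ ≤ β - ⟪w, x₀⟫_ℝ := by
      intro y hy
      have hmem : x₀ - y ∈ fdom f - fdom g := Set.sub_mem_sub hx₀ hy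
      have h := hβ₁ _ (subset_closure hmem)
      rw [hw, inner_sub_right] at h
      rw [inner_neg_right, real_inner_comm]
      linarith
    have hgshift := fconj_dom_shift g hg_prop.1 hgbound
    have hvDshift : ∀ t : ℝ, 0 ≤ t →
        vD + t • (-w) ∈ closure (fdom (fconj f) + fdom (fconj g)) := by
      intro t ht
      refine closure_shift' (fun z hz => ?_) vD hvD.1
      obtain ⟨a, ha, b, hb, rfl⟩ := Set.mem_add.mp hz
      refine subset_closure (Set.mem_add.mpr ⟨a, ha, b + t • (-w), hgshift b hb t ht, ?_⟩)
      abel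
    have hperp := minnorm_inner_nonneg hvD hvDshift
    rw [inner_neg_right] at hperp
    rw [real_inner_comm] at hpos
    linarith
  -- Part 2: vP + vD ∈ closure (dom f* + dom g*)
  · by_contra hout
    have hDconv : Convex ℝ (closure (fdom (fconj f) + fdom (fconj g))) :=
      ((fconj_dom_convex f hf_prop.1).add (fconj_dom_convex g hg_prop.1)).closure
    obtain ⟨φ, β, hβ₁, hβ₂⟩ :=
      geometric_hahn_banach_closed_point hDconv isClosed_closure hout
    set w := (InnerProductSpace.toDual ℝ H).symm φ with hwdef
    have hw : ∀ z, φ z = ⟪w, z⟫_ℝ := fun z => (InnerProductSpace.toDual_symm_apply).symm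
    have hvDlt : ⟪w, vD⟫_ℝ < β := by rw [← hw]; exact hβ₁ _ hvD.1
    have hpos : 0 < ⟪w, vP⟫_ℝ := by
      have h := hβ₂
      rw [hw, inner_add_right] at h
      linarith
    obtain ⟨a₀, ha₀⟩ := fconj_dom_nonempty f hf_prop hf_lsc hf_cvx
    have hgbound : ∀ b ∈ fdom (fconj g), ⟪b, w⟫_ℝ ≤ β - ⟪w, a₀⟫_ℝ := by
      intro b hb
      have hmem : a₀ + b ∈ fdom (fconj f) + fdom (fconj g) := Set.add_mem_add ha₀ hb
      have h := hβ₁ _ (subset_closure hmem)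
      rw [hw, inner_add_right] at h
      rw [real_inner_comm]
      linarith
    have hgrec := cl_fdom_shift g hg_prop hg_lsc hg_cvx hgbound
    have hvPshift : ∀ t : ℝ, 0 ≤ t → vP + t • (-w) ∈ closure (fdom f - fdom g) := by
      intro t ht
      refine closure_shift' (fun z hz => ?_) vP hvP.1
      obtain ⟨x, hxm, y, hym, rfl⟩ := Set.mem_sub.mp hz
      have h1 : (y + t • w) ∈ closure (fdom g) := hgrec y (subset_closure hym) t ht
      have h2 : x - (y + t • w) ∈ closure (fdom f - fdom g) := sub_mem_closure_sub hxm h1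
      have h3 : x - y + t • (-w) = x - (y + t • w) := by
        rw [smul_neg]; abel
      rw [h3]; exact h2
    have hperp := minnorm_inner_nonneg hvP hvPshift
    rw [inner_neg_right] at hperp
    rw [real_inner_comm] at hpos
    linarith


end
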